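/- arXiv:2201.04700 — 5 statements merged into one kernel-verified Lean document; each statement's English description precedes it below -/
import Mathlib

section
/- Let G be a compact Hausdorff topological group with normalized Haar probability measure μ_H, and let p', p'', p : G → ℝ be continuous central functions satisfying the semigroup conditions. Then for all G₁, G₂, G₃, G₄ ∈ G, ∫∫∫∫ p'(X₁X₄⁻¹G₄⁻¹) · p'(X₁⁻¹G₁G₂X₂) · p'(X₃G₃⁻¹X₄) · p'(X₂⁻¹X₃⁻¹) dμ_H(X₁) dμ_H(X₂) dμ_H(X₃) dμ_H(X₄) = p(G₃⁻¹G₄⁻¹G₁G₂). (Consistency of the plaquette measure under subdivision of one plaquette into four plaquettes.) -/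
open MeasureTheory

/-- Convolution lemma: for a central `p'` satisfying the semigroup condition with `p''`,
`∫ x, p' (a * x⁻¹ * b) * p' (c * x) ∂μ = p'' (c * b * a)`. -/
lemma plaquette_conv_aux {G : Type*} [Group G] [TopologicalSpace G] [IsTopologicalGroup G]
    [CompactSpace G] [T2Space G] [MeasurableSpace G] [BorelSpace G]
    (μ : Measure G) [μ.IsHaarMeasure]
    (p' p'' : G → ℝ)
    (hc : ∀ x y : G, p' (x * y) = p' (y * x))
    (hs : ∀ g h : G, ∫ x, p' (g * x) * p' (x⁻¹ * h) ∂μ = p'' (g * h))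
    (a b c : G) : ∫ x, p' (a * x⁻¹ * b) * p' (c * x) ∂μ = p'' (c * b * a) := by
  have h0 := MeasureTheory.integral_mul_left_eq_self (μ := μ)
    (fun x => p' (a * x⁻¹ * b) * p' (c * x)) c⁻¹
  rw [← h0]
  have hpt : ∀ x : G, p' (a * (c⁻¹ * x)⁻¹ * b) * p' (c * (c⁻¹ * x))
      = p' (1 * x) * p' (x⁻¹ * (c * b * a)) := by
    intro x
    rw [one_mul, mul_comm]
    congr 1
    · congr 1; group
    · rw [show a * (c⁻¹ * x)⁻¹ * b = a * (x⁻¹ * (c * b)) by group, hc a,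
        show x⁻¹ * (c * b) * a = x⁻¹ * (c * b * a) by group]
  calc (∫ x, p' (a * (c⁻¹ * x)⁻¹ * b) * p' (c * (c⁻¹ * x)) ∂μ)
      = ∫ x, p' (1 * x) * p' (x⁻¹ * (c * b * a)) ∂μ :=
        integral_congr_ae (Filter.Eventually.of_forall hpt)
    _ = p'' (1 * (c * b * a)) := hs 1 (c * b * a)
    _ = p'' (c * b * a) := by rw [one_mul]

/-- **Consistency of the plaquette measure under subdivision of one plaquette into four.**
For a compact Hausdorff topological group `G` with normalized Haar probability measure `μ`,
and continuous central functions `p', p'', p : G → ℝ` satisfying the semigroup conditions,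
the integral over the four interior edge variables of the product of the four small-plaquette
densities reproduces the large-plaquette density `p (G₃⁻¹ G₄⁻¹ G₁ G₂)`. -/
theorem plaquette_subdivision_consistency
    {G : Type*} [Group G] [TopologicalSpace G] [IsTopologicalGroup G]
    [CompactSpace G] [T2Space G] [MeasurableSpace G] [BorelSpace G]
    (μ : Measure G) [μ.IsHaarMeasure] [IsProbabilityMeasure μ]
    (p' p'' p : G → ℝ)
    (hp'cont : Continuous p') (hp''cont : Continuous p'') (hpcont : Continuous p)
    (hp'central : ∀ x y : G, p' (x * y) = p' (y * x))
    (hp''central : ∀ x y : G, p'' (x * y) = p'' (y * x))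
    (hpcentral : ∀ x y : G, p (x * y) = p (y * x))
    (hsemi1 : ∀ g h : G, ∫ x, p' (g * x) * p' (x⁻¹ * h) ∂μ = p'' (g * h))
    (hsemi2 : ∀ g h : G, ∫ x, p'' (g * x) * p'' (x⁻¹ * h) ∂μ = p (g * h))
    (G₁ G₂ G₃ G₄ : G) :
    (∫ X₁, ∫ X₂, ∫ X₃, ∫ X₄,
        p' (X₁ * X₄⁻¹ * G₄⁻¹) * p' (X₁⁻¹ * G₁ * G₂ * X₂) *
          p' (X₃ * G₃⁻¹ * X₄) * p' (X₂⁻¹ * X₃⁻¹) ∂μ ∂μ ∂μ ∂μ) =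
      p (G₃⁻¹ * G₄⁻¹ * G₁ * G₂) := by
  -- Step 1: the innermost integral over X₄
  have step4 : ∀ X₁ X₂ X₃ : G,
      (∫ X₄, p' (X₁ * X₄⁻¹ * G₄⁻¹) * p' (X₁⁻¹ * G₁ * G₂ * X₂) *
          p' (X₃ * G₃⁻¹ * X₄) * p' (X₂⁻¹ * X₃⁻¹) ∂μ)
      = p' (X₁⁻¹ * G₁ * G₂ * X₂) * p' (X₂⁻¹ * X₃⁻¹) * p'' (X₃ * G₃⁻¹ * G₄⁻¹ * X₁) := by
    intro X₁ X₂ X₃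
    have hre : ∀ X₄ : G,
        p' (X₁ * X₄⁻¹ * G₄⁻¹) * p' (X₁⁻¹ * G₁ * G₂ * X₂) *
          p' (X₃ * G₃⁻¹ * X₄) * p' (X₂⁻¹ * X₃⁻¹)
        = (p' (X₁⁻¹ * G₁ * G₂ * X₂) * p' (X₂⁻¹ * X₃⁻¹)) *
            (p' (X₁ * X₄⁻¹ * G₄⁻¹) * p' (X₃ * G₃⁻¹ * X₄)) := fun _ => by ring
    calc (∫ X₄, p' (X₁ * X₄⁻¹ * G₄⁻¹) * p' (X₁⁻¹ * G₁ * G₂ * X₂) *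
          p' (X₃ * G₃⁻¹ * X₄) * p' (X₂⁻¹ * X₃⁻¹) ∂μ)
        = ∫ X₄, (p' (X₁⁻¹ * G₁ * G₂ * X₂) * p' (X₂⁻¹ * X₃⁻¹)) *
            (p' (X₁ * X₄⁻¹ * G₄⁻¹) * p' (X₃ * G₃⁻¹ * X₄)) ∂μ :=
          integral_congr_ae (Filter.Eventually.of_forall hre)
      _ = (p' (X₁⁻¹ * G₁ * G₂ * X₂) * p' (X₂⁻¹ * X₃⁻¹)) *
            ∫ X₄, p' (X₁ * X₄⁻¹ * G₄⁻¹) * p' ((X₃ * G₃⁻¹) * X₄) ∂μ :=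
          integral_const_mul _ _
      _ = (p' (X₁⁻¹ * G₁ * G₂ * X₂) * p' (X₂⁻¹ * X₃⁻¹)) * p'' (X₃ * G₃⁻¹ * G₄⁻¹ * X₁) := by
          rw [plaquette_conv_aux μ p' p'' hp'central hsemi1 X₁ G₄⁻¹ (X₃ * G₃⁻¹)]
      _ = p' (X₁⁻¹ * G₁ * G₂ * X₂) * p' (X₂⁻¹ * X₃⁻¹) * p'' (X₃ * G₃⁻¹ * G₄⁻¹ * X₁) := by
          ring
  -- Step 2: for each X₁, the triple inner integral is the constant answer
  have h23 : ∀ X₁ : G,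
      (∫ X₂, ∫ X₃, ∫ X₄, p' (X₁ * X₄⁻¹ * G₄⁻¹) * p' (X₁⁻¹ * G₁ * G₂ * X₂) *
          p' (X₃ * G₃⁻¹ * X₄) * p' (X₂⁻¹ * X₃⁻¹) ∂μ ∂μ ∂μ)
      = p (G₃⁻¹ * G₄⁻¹ * G₁ * G₂) := by
    intro X₁
    have hcont : Continuous (Function.uncurry fun X₂ X₃ : G =>
        p' (X₁⁻¹ * G₁ * G₂ * X₂) * p' (X₂⁻¹ * X₃⁻¹) * p'' (X₃ * G₃⁻¹ * G₄⁻¹ * X₁)) := by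
      apply Continuous.mul
      apply Continuous.mul
      · exact hp'cont.comp (by continuity)
      · exact hp'cont.comp (by continuity)
      · exact hp''cont.comp (by continuity)
    calc (∫ X₂, ∫ X₃, ∫ X₄, p' (X₁ * X₄⁻¹ * G₄⁻¹) * p' (X₁⁻¹ * G₁ * G₂ * X₂) *
          p' (X₃ * G₃⁻¹ * X₄) * p' (X₂⁻¹ * X₃⁻¹) ∂μ ∂μ ∂μ)
        = ∫ X₂, ∫ X₃, p' (X₁⁻¹ * G₁ * G₂ * X₂) * p' (X₂⁻¹ * X₃⁻¹) *
            p'' (X₃ * G₃⁻¹ * G₄⁻¹ * X₁) ∂μ ∂μ :=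
          integral_congr_ae (Filter.Eventually.of_forall fun X₂ =>
            integral_congr_ae (Filter.Eventually.of_forall fun X₃ => step4 X₁ X₂ X₃))
      _ = ∫ X₃, ∫ X₂, p' (X₁⁻¹ * G₁ * G₂ * X₂) * p' (X₂⁻¹ * X₃⁻¹) *
            p'' (X₃ * G₃⁻¹ * G₄⁻¹ * X₁) ∂μ ∂μ :=
          integral_integral_swap_of_hasCompactSupport hcont
            (HasCompactSupport.of_compactSpace _)
      _ = ∫ X₃, p'' (X₃ * G₃⁻¹ * G₄⁻¹ * X₁) * p'' (X₁⁻¹ * G₁ * G₂ * X₃⁻¹) ∂μ := by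
          refine integral_congr_ae (Filter.Eventually.of_forall fun X₃ => ?_)
          beta_reduce
          have hre2 : ∀ X₂ : G,
              p' (X₁⁻¹ * G₁ * G₂ * X₂) * p' (X₂⁻¹ * X₃⁻¹) * p'' (X₃ * G₃⁻¹ * G₄⁻¹ * X₁)
              = p'' (X₃ * G₃⁻¹ * G₄⁻¹ * X₁) *
                  (p' ((X₁⁻¹ * G₁ * G₂) * X₂) * p' (X₂⁻¹ * X₃⁻¹)) := fun _ => by ring
          rw [integral_congr_ae (Filter.Eventually.of_forall hre2), integral_const_mul,
            hsemi1 (X₁⁻¹ * G₁ * G₂) X₃⁻¹]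
      _ = ∫ X₃, p'' ((G₃⁻¹ * G₄⁻¹ * X₁) * X₃) * p'' (X₃⁻¹ * (X₁⁻¹ * G₁ * G₂)) ∂μ := by
          refine integral_congr_ae (Filter.Eventually.of_forall fun X₃ => ?_)
          beta_reduce
          rw [show X₃ * G₃⁻¹ * G₄⁻¹ * X₁ = X₃ * (G₃⁻¹ * G₄⁻¹ * X₁) by group,
            hp''central X₃ (G₃⁻¹ * G₄⁻¹ * X₁), hp''central (X₁⁻¹ * G₁ * G₂) X₃⁻¹]
      _ = p ((G₃⁻¹ * G₄⁻¹ * X₁) * (X₁⁻¹ * G₁ * G₂)) := hsemi2 _ _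
      _ = p (G₃⁻¹ * G₄⁻¹ * G₁ * G₂) := by congr 1; group
  rw [integral_congr_ae (Filter.Eventually.of_forall h23), integral_const]
  simp
end

section
/- Let G be a compact Hausdorff topological group with normalized Haar probability measure μ_H, and let p', p'', p : G → ℝ be continuous central functions satisfying the semigroup conditions. Then for all G₁, G₂, G₃, G₄, H₁, H₂, H₃ ∈ G, the integral over the fifteen variables g₁, g₂, g₃, g₄, y₁, y₂, y₃, y₄, z₁, z₂, z₃, z₄, h₁, h₂, h₃ (each with respect to μ_H) of the product p'(g₁y₁y₄⁻¹g₄G₄⁻¹) · p'(g₁⁻¹G₁G₂g₂⁻¹y₂⁻¹y₁⁻¹) · p'(y₄y₃g₃G₃⁻¹g₄⁻¹) · p'(y₂g₂g₃⁻¹y₃⁻¹) · p'(h₁z₁z₄⁻¹g₂G₂⁻¹) · p'(h₁⁻¹H₁H₂h₂⁻¹z₂⁻¹z₁⁻¹) · p'(z₄z₃h₃H₃⁻¹g₂⁻¹) · p'(z₂h₂h₃⁻¹z₃⁻¹) equals p(G₃⁻¹G₄⁻¹G₁G₂) · p(H₃⁻¹G₂⁻¹H₁H₂). (Consistency of the plaquette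 measure under simultaneous subdivision of two contiguous plaquettes sharing the common edge G₂.) -/
open MeasureTheory

/-- **Consistency of the plaquette measure under simultaneous subdivision of two contiguous
plaquettes sharing the common edge `G₂`.**  For a compact Hausdorff topological group `G` with
normalized Haar probability measure `μ`, and continuous central functions `p', p'', p : G → ℝ`
satisfying the semigroup conditions, the integral over the fifteen interior variables of the
product of the eight small-plaquette densities equals the product of the two large-plaquette
densities `p (G₃⁻¹ G₄⁻¹ G₁ G₂) · p (H₃⁻¹ G₂⁻¹ H₁ H₂)`. -/
theorem two_contiguous_plaquettes_subdivision_consistency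
    {G : Type*} [Group G] [TopologicalSpace G] [IsTopologicalGroup G]
    [CompactSpace G] [T2Space G] [MeasurableSpace G] [BorelSpace G]
    (μ : Measure G) [μ.IsHaarMeasure] [IsProbabilityMeasure μ]
    (p' p'' p : G → ℝ)
    (hp'cont : Continuous p') (hp''cont : Continuous p'') (hpcont : Continuous p)
    (hp'central : ∀ x y : G, p' (x * y) = p' (y * x))
    (hp''central : ∀ x y : G, p'' (x * y) = p'' (y * x))
    (hpcentral : ∀ x y : G, p (x * y) = p (y * x))
    (hsemi1 : ∀ g h : G, ∫ x, p' (g * x) * p' (x⁻¹ * h) ∂μ = p'' (g * h))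
    (hsemi2 : ∀ g h : G, ∫ x, p'' (g * x) * p'' (x⁻¹ * h) ∂μ = p (g * h))
    (G₁ G₂ G₃ G₄ H₁ H₂ H₃ : G) :
    (∫ g₁, ∫ g₂, ∫ g₃, ∫ g₄, ∫ y₁, ∫ y₂, ∫ y₃, ∫ y₄, ∫ z₁, ∫ z₂, ∫ z₃, ∫ z₄, ∫ h₁, ∫ h₂, ∫ h₃,
        p' (g₁ * y₁ * y₄⁻¹ * g₄ * G₄⁻¹) * p' (g₁⁻¹ * G₁ * G₂ * g₂⁻¹ * y₂⁻¹ * y₁⁻¹) *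
          p' (y₄ * y₃ * g₃ * G₃⁻¹ * g₄⁻¹) * p' (y₂ * g₂ * g₃⁻¹ * y₃⁻¹) *
          p' (h₁ * z₁ * z₄⁻¹ * g₂ * G₂⁻¹) * p' (h₁⁻¹ * H₁ * H₂ * h₂⁻¹ * z₂⁻¹ * z₁⁻¹) *
          p' (z₄ * z₃ * h₃ * H₃⁻¹ * g₂⁻¹) * p' (z₂ * h₂ * h₃⁻¹ * z₃⁻¹)
        ∂μ ∂μ ∂μ ∂μ ∂μ ∂μ ∂μ ∂μ ∂μ ∂μ ∂μ ∂μ ∂μ ∂μ ∂μ) =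
      p (G₃⁻¹ * G₄⁻¹ * G₁ * G₂) * p (H₃⁻¹ * G₂⁻¹ * H₁ * H₂) := by
  -- The Haar measure on a compact group is also right invariant.
  haveI hri : μ.IsMulRightInvariant := by
    constructor
    intro g
    haveI : IsProbabilityMeasure (Measure.map (· * g) μ) :=
      Measure.isProbabilityMeasure_map (measurable_mul_const g).aemeasurable
    exact Measure.isHaarMeasure_eq_of_isProbabilityMeasure (Measure.map (· * g) μ) μ
  -- conjugation invariance of central functions
  have hconj : ∀ (f : G → ℝ), (∀ x y : G, f (x * y) = f (y * x)) →
      ∀ u v : G, f (u * v * u⁻¹) = f v := by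
    intro f hf u v
    rw [hf (u * v) u⁻¹, inv_mul_cancel_left]
  -- Fubini for continuous functions on a compact group
  have fub : ∀ f : G → G → ℝ, Continuous (Function.uncurry f) →
      (∫ x, ∫ y, f x y ∂μ ∂μ) = ∫ y, ∫ x, f x y ∂μ ∂μ := fun f hf =>
    integral_integral_swap_of_hasCompactSupport hf (HasCompactSupport.of_compactSpace _)
  -- the mixed convolution
  set Q : G → ℝ := fun w => ∫ x, p'' x * p' (x⁻¹ * w) ∂μ with hQ
  have LQ1 : ∀ a b : G, ∫ x, p'' (a * x) * p' (x⁻¹ * b) ∂μ = Q (a * b) := by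
    intro a b
    have e : (fun x => p'' (a * x) * p' (x⁻¹ * b))
        = fun x => p'' (a * x) * p' ((a * x)⁻¹ * (a * b)) := by
      funext x
      rw [show (a * x)⁻¹ * (a * b) = x⁻¹ * b by group]
    rw [e, hQ]
    exact integral_mul_left_eq_self (fun u => p'' u * p' (u⁻¹ * (a * b))) a
  have Qcent : ∀ u v : G, Q (u * v) = Q (v * u) := by
    intro u v
    rw [hQ]
    show (∫ x, p'' x * p' (x⁻¹ * (u * v)) ∂μ) = ∫ x, p'' x * p' (x⁻¹ * (v * u)) ∂μ
    calc (∫ x, p'' x * p' (x⁻¹ * (u * v)) ∂μ)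
        = ∫ x, p'' (v⁻¹ * x) * p' ((v⁻¹ * x)⁻¹ * (u * v)) ∂μ :=
          (integral_mul_left_eq_self (fun x => p'' x * p' (x⁻¹ * (u * v))) v⁻¹).symm
      _ = ∫ x, p'' (v⁻¹ * (x * v)) * p' ((v⁻¹ * (x * v))⁻¹ * (u * v)) ∂μ :=
          (integral_mul_right_eq_self
            (fun x => p'' (v⁻¹ * x) * p' ((v⁻¹ * x)⁻¹ * (u * v))) v).symm
      _ = ∫ x, p'' x * p' (x⁻¹ * (v * u)) ∂μ := by
          congr 1; funext x
          have h1 : p'' (v⁻¹ * (x * v)) = p'' x := by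
            rw [show v⁻¹ * (x * v) = v⁻¹ * x * (v⁻¹)⁻¹ by group]
            exact hconj p'' hp''central v⁻¹ x
          have h2 : p' ((v⁻¹ * (x * v))⁻¹ * (u * v)) = p' (x⁻¹ * (v * u)) := by
            rw [show (v⁻¹ * (x * v))⁻¹ * (u * v) = v⁻¹ * (x⁻¹ * (v * u)) * (v⁻¹)⁻¹ by group]
            exact hconj p' hp'central v⁻¹ _
          rw [h1, h2]
  have LQ2 : ∀ a b : G, ∫ x, Q (a * x) * p' (x⁻¹ * b) ∂μ = p (a * b) := by
    intro a b
    have cont2 : Continuous (Function.uncurry fun x y : G =>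
        (p'' (a * y) * p' (y⁻¹ * x)) * p' (x⁻¹ * b)) :=
      ((hp''cont.comp (continuous_const.mul continuous_snd)).mul
        (hp'cont.comp (continuous_snd.inv.mul continuous_fst))).mul
        (hp'cont.comp (continuous_fst.inv.mul continuous_const))
    have e0 : ∀ x : G, Q (a * x) * p' (x⁻¹ * b)
        = ∫ y, (p'' (a * y) * p' (y⁻¹ * x)) * p' (x⁻¹ * b) ∂μ := by
      intro x
      rw [hQ]
      show (∫ y, p'' y * p' (y⁻¹ * (a * x)) ∂μ) * p' (x⁻¹ * b) = _
      calc (∫ y, p'' y * p' (y⁻¹ * (a * x)) ∂μ) * p' (x⁻¹ * b)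
          = ∫ y, (p'' y * p' (y⁻¹ * (a * x))) * p' (x⁻¹ * b) ∂μ :=
            (integral_mul_const _ _).symm
        _ = ∫ y, (p'' (a * y) * p' ((a * y)⁻¹ * (a * x))) * p' (x⁻¹ * b) ∂μ :=
            (integral_mul_left_eq_self
              (fun y => (p'' y * p' (y⁻¹ * (a * x))) * p' (x⁻¹ * b)) a).symm
        _ = ∫ y, (p'' (a * y) * p' (y⁻¹ * x)) * p' (x⁻¹ * b) ∂μ := by
            congr 1; funext y
            rw [show (a * y)⁻¹ * (a * x) = y⁻¹ * x by group]
    calc (∫ x, Q (a * x) * p' (x⁻¹ * b) ∂μ)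
        = ∫ x, ∫ y, (p'' (a * y) * p' (y⁻¹ * x)) * p' (x⁻¹ * b) ∂μ ∂μ := by
          simp only [e0]
      _ = ∫ y, ∫ x, (p'' (a * y) * p' (y⁻¹ * x)) * p' (x⁻¹ * b) ∂μ ∂μ := fub _ cont2
      _ = p (a * b) := by
          simp only [mul_assoc, integral_const_mul, hsemi1, hsemi2]
  have LQ3 : ∀ a b : G, ∫ x, p' (a * x) * Q (x⁻¹ * b) ∂μ = p (a * b) := by
    intro a b
    have cont3 : Continuous (Function.uncurry fun x y : G =>
        p' (a * x) * (p'' y * p' (y⁻¹ * (x⁻¹ * b)))) :=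
      (hp'cont.comp (continuous_const.mul continuous_fst)).mul
        ((hp''cont.comp continuous_snd).mul
          (hp'cont.comp (continuous_snd.inv.mul (continuous_fst.inv.mul continuous_const))))
    have e0 : ∀ x : G, p' (a * x) * Q (x⁻¹ * b)
        = ∫ y, p' (a * x) * (p'' y * p' (y⁻¹ * (x⁻¹ * b))) ∂μ := by
      intro x
      rw [hQ]
      exact (integral_const_mul (p' (a * x))
        (fun y => p'' y * p' (y⁻¹ * (x⁻¹ * b)))).symm
    have e1 : ∀ y x : G, p' (a * x) * (p'' y * p' (y⁻¹ * (x⁻¹ * b)))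
        = p'' y * (p' (a * x) * p' (x⁻¹ * (b * y⁻¹))) := by
      intro y x
      rw [hp'central y⁻¹ (x⁻¹ * b), mul_assoc x⁻¹ b y⁻¹]
      ring
    have e2 : ∀ y : G, p'' y * p'' (a * (b * y⁻¹))
        = p'' (1 * y) * p'' (y⁻¹ * (a * b)) := by
      intro y
      rw [one_mul, ← mul_assoc a b y⁻¹, hp''central (a * b) y⁻¹]
    calc (∫ x, p' (a * x) * Q (x⁻¹ * b) ∂μ)
        = ∫ x, ∫ y, p' (a * x) * (p'' y * p' (y⁻¹ * (x⁻¹ * b))) ∂μ ∂μ := by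
          simp only [e0]
      _ = ∫ y, ∫ x, p' (a * x) * (p'' y * p' (y⁻¹ * (x⁻¹ * b))) ∂μ ∂μ := fub _ cont3
      _ = p (a * b) := by
          simp only [e1, integral_const_mul, hsemi1]
          simp only [e2]
          rw [hsemi2, one_mul]
  -- Step lemmas for the inner plaquette (integration order: z's outside, h's inside)
  have S1 : ∀ (C : ℝ) (z₂ z₃ z₄ h₂ d A₃ : G),
      ∫ h₃, C * p' (z₄ * z₃ * h₃ * A₃⁻¹ * d⁻¹) * p' (z₂ * h₂ * h₃⁻¹ * z₃⁻¹) ∂μ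
        = C * p'' (A₃⁻¹ * d⁻¹ * z₄ * z₂ * h₂) := by
    intro C z₂ z₃ z₄ h₂ d A₃
    have e : ∀ h₃ : G, C * p' (z₄ * z₃ * h₃ * A₃⁻¹ * d⁻¹) * p' (z₂ * h₂ * h₃⁻¹ * z₃⁻¹)
        = C * (p' ((A₃⁻¹ * (d⁻¹ * (z₄ * z₃))) * h₃) * p' (h₃⁻¹ * (z₃⁻¹ * (z₂ * h₂)))) := by
      intro h₃
      rw [show z₄ * z₃ * h₃ * A₃⁻¹ * d⁻¹ = (z₄ * z₃ * h₃) * (A₃⁻¹ * d⁻¹) by group,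
        hp'central (z₄ * z₃ * h₃) (A₃⁻¹ * d⁻¹),
        show (A₃⁻¹ * d⁻¹) * (z₄ * z₃ * h₃) = (A₃⁻¹ * (d⁻¹ * (z₄ * z₃))) * h₃ by group,
        show z₂ * h₂ * h₃⁻¹ * z₃⁻¹ = (z₂ * h₂) * (h₃⁻¹ * z₃⁻¹) by group,
        hp'central (z₂ * h₂) (h₃⁻¹ * z₃⁻¹),
        show (h₃⁻¹ * z₃⁻¹) * (z₂ * h₂) = h₃⁻¹ * (z₃⁻¹ * (z₂ * h₂)) by group]
      ring
    simp only [e]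
    rw [integral_const_mul, hsemi1,
      show (A₃⁻¹ * (d⁻¹ * (z₄ * z₃))) * (z₃⁻¹ * (z₂ * h₂))
        = A₃⁻¹ * d⁻¹ * z₄ * z₂ * h₂ by group]
  have S2 : ∀ (C : ℝ) (z₁ z₂ h₁ A₁ A₂ W : G),
      ∫ h₂, C * p' (h₁⁻¹ * A₁ * A₂ * h₂⁻¹ * z₂⁻¹ * z₁⁻¹) * p'' (W * h₂) ∂μ
        = C * Q (h₁⁻¹ * (A₁ * A₂ * W * z₂⁻¹ * z₁⁻¹)) := by
    intro C z₁ z₂ h₁ A₁ A₂ W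
    have e : ∀ h₂ : G, C * p' (h₁⁻¹ * A₁ * A₂ * h₂⁻¹ * z₂⁻¹ * z₁⁻¹) * p'' (W * h₂)
        = C * (p'' (W * h₂) * p' (h₂⁻¹ * (z₂⁻¹ * (z₁⁻¹ * (h₁⁻¹ * (A₁ * A₂)))))) := by
      intro h₂
      rw [show h₁⁻¹ * A₁ * A₂ * h₂⁻¹ * z₂⁻¹ * z₁⁻¹
            = (h₁⁻¹ * (A₁ * A₂)) * (h₂⁻¹ * (z₂⁻¹ * z₁⁻¹)) by group,
        hp'central (h₁⁻¹ * (A₁ * A₂)) (h₂⁻¹ * (z₂⁻¹ * z₁⁻¹)),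
        show (h₂⁻¹ * (z₂⁻¹ * z₁⁻¹)) * (h₁⁻¹ * (A₁ * A₂))
            = h₂⁻¹ * (z₂⁻¹ * (z₁⁻¹ * (h₁⁻¹ * (A₁ * A₂)))) by group]
      ring
    simp only [e]
    rw [integral_const_mul, LQ1,
      show W * (z₂⁻¹ * (z₁⁻¹ * (h₁⁻¹ * (A₁ * A₂))))
          = (W * (z₂⁻¹ * z₁⁻¹)) * (h₁⁻¹ * (A₁ * A₂)) by group,
      Qcent,
      show (h₁⁻¹ * (A₁ * A₂)) * (W * (z₂⁻¹ * z₁⁻¹))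
          = h₁⁻¹ * (A₁ * A₂ * W * z₂⁻¹ * z₁⁻¹) by group]
  have S3 : ∀ (C : ℝ) (z₁ z₄ d A₄ U : G),
      ∫ h₁, C * p' (h₁ * z₁ * z₄⁻¹ * d * A₄⁻¹) * Q (h₁⁻¹ * U) ∂μ
        = C * p (z₁ * z₄⁻¹ * d * A₄⁻¹ * U) := by
    intro C z₁ z₄ d A₄ U
    have e : ∀ h₁ : G, C * p' (h₁ * z₁ * z₄⁻¹ * d * A₄⁻¹) * Q (h₁⁻¹ * U)
        = C * (p' ((z₁ * z₄⁻¹ * d * A₄⁻¹) * h₁) * Q (h₁⁻¹ * U)) := by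
      intro h₁
      rw [show h₁ * z₁ * z₄⁻¹ * d * A₄⁻¹ = h₁ * (z₁ * z₄⁻¹ * d * A₄⁻¹) by group,
        hp'central h₁ (z₁ * z₄⁻¹ * d * A₄⁻¹)]
      ring
    simp only [e]
    rw [integral_const_mul, LQ3]
  -- The inner (second) plaquette computation, with the common edge `d` fixed.
  have hP7 : ∀ (C : ℝ) (d A₁ A₂ A₃ A₄ : G),
      (∫ z₁, ∫ z₂, ∫ z₃, ∫ z₄, ∫ h₁, ∫ h₂, ∫ h₃,
        C * p' (h₁ * z₁ * z₄⁻¹ * d * A₄⁻¹) * p' (h₁⁻¹ * A₁ * A₂ * h₂⁻¹ * z₂⁻¹ * z₁⁻¹) *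
          p' (z₄ * z₃ * h₃ * A₃⁻¹ * d⁻¹) * p' (z₂ * h₂ * h₃⁻¹ * z₃⁻¹)
        ∂μ ∂μ ∂μ ∂μ ∂μ ∂μ ∂μ)
        = p (A₃⁻¹ * A₄⁻¹ * A₁ * A₂) * C := by
    intro C d A₁ A₂ A₃ A₄
    simp only [S1, S2, S3]
    have hw : ∀ z₁ z₂ z₄ : G,
        p (z₁ * z₄⁻¹ * d * A₄⁻¹ * (A₁ * A₂ * (A₃⁻¹ * d⁻¹ * z₄ * z₂) * z₂⁻¹ * z₁⁻¹))
          = p (A₃⁻¹ * A₄⁻¹ * A₁ * A₂) := by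
      intro z₁ z₂ z₄
      rw [show z₁ * z₄⁻¹ * d * A₄⁻¹ * (A₁ * A₂ * (A₃⁻¹ * d⁻¹ * z₄ * z₂) * z₂⁻¹ * z₁⁻¹)
            = (z₁ * z₄⁻¹ * d) * (A₄⁻¹ * (A₁ * (A₂ * A₃⁻¹))) * (z₁ * z₄⁻¹ * d)⁻¹ by group,
        hconj p hpcentral,
        show A₄⁻¹ * (A₁ * (A₂ * A₃⁻¹)) = (A₄⁻¹ * A₁ * A₂) * A₃⁻¹ by group,
        hpcentral (A₄⁻¹ * A₁ * A₂) A₃⁻¹,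
        show A₃⁻¹ * (A₄⁻¹ * A₁ * A₂) = A₃⁻¹ * A₄⁻¹ * A₁ * A₂ by group]
    simp only [hw]
    simp only [integral_const, probReal_univ, measure_univ, ENNReal.toReal_one, one_smul]
    ring
  -- Step lemmas for the outer (first) plaquette (integration order: g's outside, y's inside)
  have T1 : ∀ (C : ℝ) (h₁ z₁ z₃ h₃ d A₃ A₄ : G),
      ∫ z₄, C * p' (h₁ * z₁ * z₄⁻¹ * d * A₄⁻¹) * p' (z₄ * z₃ * h₃ * A₃⁻¹ * d⁻¹) ∂μ
        = C * p'' (z₃ * (h₃ * (A₃⁻¹ * (A₄⁻¹ * (h₁ * z₁))))) := by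
    intro C h₁ z₁ z₃ h₃ d A₃ A₄
    have e : ∀ z₄ : G, C * p' (h₁ * z₁ * z₄⁻¹ * d * A₄⁻¹) * p' (z₄ * z₃ * h₃ * A₃⁻¹ * d⁻¹)
        = C * (p' ((z₃ * (h₃ * (A₃⁻¹ * d⁻¹))) * z₄) * p' (z₄⁻¹ * (d * (A₄⁻¹ * (h₁ * z₁))))) := by
      intro z₄
      rw [show h₁ * z₁ * z₄⁻¹ * d * A₄⁻¹
            = (h₁ * z₁) * (z₄⁻¹ * (d * (A₄⁻¹ * (h₁ * z₁)))) * (h₁ * z₁)⁻¹ by group,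
        hconj p' hp'central,
        show z₄ * z₃ * h₃ * A₃⁻¹ * d⁻¹ = z₄ * (z₃ * (h₃ * (A₃⁻¹ * d⁻¹))) by group,
        hp'central z₄ (z₃ * (h₃ * (A₃⁻¹ * d⁻¹)))]
      ring
    simp only [e]
    rw [integral_const_mul, hsemi1,
      show (z₃ * (h₃ * (A₃⁻¹ * d⁻¹))) * (d * (A₄⁻¹ * (h₁ * z₁)))
          = z₃ * (h₃ * (A₃⁻¹ * (A₄⁻¹ * (h₁ * z₁)))) by group]
  have T2 : ∀ (C : ℝ) (z₂ h₂ h₃ W : G),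
      ∫ z₃, C * p' (z₂ * h₂ * h₃⁻¹ * z₃⁻¹) * p'' (z₃ * W) ∂μ
        = C * Q (h₂ * h₃⁻¹ * W * z₂) := by
    intro C z₂ h₂ h₃ W
    have e : ∀ z₃ : G, C * p' (z₂ * h₂ * h₃⁻¹ * z₃⁻¹) * p'' (z₃ * W)
        = C * (p'' (W * z₃) * p' (z₃⁻¹ * (z₂ * (h₂ * h₃⁻¹)))) := by
      intro z₃
      rw [hp''central z₃ W,
        show z₂ * h₂ * h₃⁻¹ * z₃⁻¹ = (z₂ * (h₂ * h₃⁻¹)) * z₃⁻¹ by group,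
        hp'central (z₂ * (h₂ * h₃⁻¹)) z₃⁻¹]
      ring
    simp only [e]
    rw [integral_const_mul, LQ1,
      show W * (z₂ * (h₂ * h₃⁻¹)) = (W * z₂) * (h₂ * h₃⁻¹) by group,
      Qcent,
      show (h₂ * h₃⁻¹) * (W * z₂) = h₂ * h₃⁻¹ * W * z₂ by group]
  have T3 : ∀ (C : ℝ) (z₁ h₁ h₂ A₁ A₂ V : G),
      ∫ z₂, C * p' (h₁⁻¹ * A₁ * A₂ * h₂⁻¹ * z₂⁻¹ * z₁⁻¹) * Q (V * z₂) ∂μ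
        = C * p (V * (z₁⁻¹ * (h₁⁻¹ * (A₁ * (A₂ * h₂⁻¹))))) := by
    intro C z₁ h₁ h₂ A₁ A₂ V
    have e : ∀ z₂ : G, C * p' (h₁⁻¹ * A₁ * A₂ * h₂⁻¹ * z₂⁻¹ * z₁⁻¹) * Q (V * z₂)
        = C * (Q (V * z₂) * p' (z₂⁻¹ * (z₁⁻¹ * (h₁⁻¹ * (A₁ * (A₂ * h₂⁻¹)))))) := by
      intro z₂
      rw [show h₁⁻¹ * A₁ * A₂ * h₂⁻¹ * z₂⁻¹ * z₁⁻¹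
            = (h₁⁻¹ * (A₁ * (A₂ * h₂⁻¹))) * (z₂⁻¹ * z₁⁻¹) by group,
        hp'central (h₁⁻¹ * (A₁ * (A₂ * h₂⁻¹))) (z₂⁻¹ * z₁⁻¹),
        show (z₂⁻¹ * z₁⁻¹) * (h₁⁻¹ * (A₁ * (A₂ * h₂⁻¹)))
            = z₂⁻¹ * (z₁⁻¹ * (h₁⁻¹ * (A₁ * (A₂ * h₂⁻¹)))) by group]
      ring
    simp only [e]
    rw [integral_const_mul, LQ2]
  -- The outer (first) plaquette computation, including integration over the common edge.
  have hP8 : ∀ (K : ℝ) (A₁ A₂ A₃ A₄ : G),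
      (∫ h₁, ∫ h₂, ∫ h₃, ∫ d, ∫ z₁, ∫ z₂, ∫ z₃, ∫ z₄,
        K * (p' (h₁ * z₁ * z₄⁻¹ * d * A₄⁻¹) * p' (h₁⁻¹ * A₁ * A₂ * h₂⁻¹ * z₂⁻¹ * z₁⁻¹) *
          p' (z₄ * z₃ * h₃ * A₃⁻¹ * d⁻¹) * p' (z₂ * h₂ * h₃⁻¹ * z₃⁻¹))
        ∂μ ∂μ ∂μ ∂μ ∂μ ∂μ ∂μ ∂μ)
        = p (A₃⁻¹ * A₄⁻¹ * A₁ * A₂) * K := by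
    intro K A₁ A₂ A₃ A₄
    have rearr : ∀ h₁ h₂ h₃ d z₁ z₂ z₃ z₄ : G,
        K * (p' (h₁ * z₁ * z₄⁻¹ * d * A₄⁻¹) * p' (h₁⁻¹ * A₁ * A₂ * h₂⁻¹ * z₂⁻¹ * z₁⁻¹) *
          p' (z₄ * z₃ * h₃ * A₃⁻¹ * d⁻¹) * p' (z₂ * h₂ * h₃⁻¹ * z₃⁻¹))
        = K * p' (h₁⁻¹ * A₁ * A₂ * h₂⁻¹ * z₂⁻¹ * z₁⁻¹) * p' (z₂ * h₂ * h₃⁻¹ * z₃⁻¹) *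
            p' (h₁ * z₁ * z₄⁻¹ * d * A₄⁻¹) * p' (z₄ * z₃ * h₃ * A₃⁻¹ * d⁻¹) := by
      intros; ring
    simp only [rearr, T1, T2, T3]
    have hw : ∀ h₁ h₂ h₃ z₁ : G,
        p (h₂ * h₃⁻¹ * (h₃ * (A₃⁻¹ * (A₄⁻¹ * (h₁ * z₁)))) *
            (z₁⁻¹ * (h₁⁻¹ * (A₁ * (A₂ * h₂⁻¹)))))
          = p (A₃⁻¹ * A₄⁻¹ * A₁ * A₂) := by
      intro h₁ h₂ h₃ z₁
      rw [show h₂ * h₃⁻¹ * (h₃ * (A₃⁻¹ * (A₄⁻¹ * (h₁ * z₁)))) *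
            (z₁⁻¹ * (h₁⁻¹ * (A₁ * (A₂ * h₂⁻¹))))
            = h₂ * (A₃⁻¹ * A₄⁻¹ * A₁ * A₂) * h₂⁻¹ by group,
        hconj p hpcentral]
    simp only [hw]
    simp only [integral_const, probReal_univ, measure_univ, ENNReal.toReal_one, one_smul]
    ring
  simp only [hP7]
  exact hP8 (p (H₃⁻¹ * G₂⁻¹ * H₁ * H₂)) G₁ G₂ G₃ G₄
end

section
/- Let G be a compact Hausdorff topological group with normalized Haar probability measure μ_H, and let (p_t)_{t>0} be a family of continuous central functions p_t : G → ℝ forming a convolution semigroup: ∫ p_s(gx) p_t(x⁻¹h) dμ_H(x) = p_{s+t}(gh) for all s, t > 0 and g, h ∈ G. Then for every β > 0 and all G₁, G₂, G₃, G₄ ∈ G, ∫∫∫∫ p_{β/4}(X₁X₄⁻¹G₄⁻¹) · p_{β/4}(X₁⁻¹G₁G₂X₂) · p_{β/4}(X₃G₃⁻¹X₄) · p_{β/4}(X₂⁻¹X₃⁻¹) dμ_H(X₁) dμ_H(X₂) dμ_H(X₃) dμ_H(X₄) = p_β(G₃⁻¹G₄⁻¹G₁G₂). (Subdivision of one plaquette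 of parameter β into four plaquettes requires the replacement β → β/4.) -/
open MeasureTheory

/-- **Subdivision of one plaquette of parameter `β` into four plaquettes requires the
replacement `β → β/4`.**  For a compact Hausdorff topological group `G` with normalized Haar
probability measure `μ`, and a convolution semigroup `(p t)_{t>0}` of continuous central
functions (such as the heat kernel on a compact Lie group), the integral over the four interior
edge variables of the product of the four `β/4`-plaquette densities equals
`p β (G₃⁻¹ G₄⁻¹ G₁ G₂)`. -/
theorem plaquette_subdivision_beta_quarter
    {G : Type*} [Group G] [TopologicalSpace G] [IsTopologicalGroup G]
    [CompactSpace G] [T2Space G] [MeasurableSpace G] [BorelSpace G]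
    (μ : Measure G) [μ.IsHaarMeasure] [IsProbabilityMeasure μ]
    (p : ℝ → G → ℝ)
    (hpcont : ∀ t : ℝ, 0 < t → Continuous (p t))
    (hpcentral : ∀ t : ℝ, 0 < t → ∀ x y : G, p t (x * y) = p t (y * x))
    (hsemi : ∀ s t : ℝ, 0 < s → 0 < t →
      ∀ g h : G, ∫ x, p s (g * x) * p t (x⁻¹ * h) ∂μ = p (s + t) (g * h))
    (β : ℝ) (hβ : 0 < β) (G₁ G₂ G₃ G₄ : G) :
    (∫ X₁, ∫ X₂, ∫ X₃, ∫ X₄,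
        p (β / 4) (X₁ * X₄⁻¹ * G₄⁻¹) * p (β / 4) (X₁⁻¹ * G₁ * G₂ * X₂) *
          p (β / 4) (X₃ * G₃⁻¹ * X₄) * p (β / 4) (X₂⁻¹ * X₃⁻¹) ∂μ ∂μ ∂μ ∂μ) =
      p β (G₃⁻¹ * G₄⁻¹ * G₁ * G₂) := by
  have h4 : (0:ℝ) < β / 4 := by linarith
  have h2 : (0:ℝ) < β / 4 + β / 4 := by linarith
  have h34 : (0:ℝ) < β / 4 + β / 4 + β / 4 := by linarith
  have step4 : ∀ X₁ X₂ X₃ : G,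
      (∫ X₄, p (β / 4) (X₁ * X₄⁻¹ * G₄⁻¹) * p (β / 4) (X₁⁻¹ * G₁ * G₂ * X₂) *
          p (β / 4) (X₃ * G₃⁻¹ * X₄) * p (β / 4) (X₂⁻¹ * X₃⁻¹) ∂μ)
      = p (β / 4) (X₁⁻¹ * G₁ * G₂ * X₂) * p (β / 4) (X₂⁻¹ * X₃⁻¹) *
          p (β / 4 + β / 4) (X₃ * G₃⁻¹ * (G₄⁻¹ * X₁)) := by
    intro X₁ X₂ X₃
    have e : ∀ X₄ : G, p (β / 4) (X₁ * X₄⁻¹ * G₄⁻¹) * p (β / 4) (X₁⁻¹ * G₁ * G₂ * X₂) *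
          p (β / 4) (X₃ * G₃⁻¹ * X₄) * p (β / 4) (X₂⁻¹ * X₃⁻¹)
        = (p (β / 4) (X₁⁻¹ * G₁ * G₂ * X₂) * p (β / 4) (X₂⁻¹ * X₃⁻¹)) *
          (p (β / 4) (X₃ * G₃⁻¹ * X₄) * p (β / 4) (X₄⁻¹ * (G₄⁻¹ * X₁))) := by
      intro X₄
      have e1 : p (β / 4) (X₁ * X₄⁻¹ * G₄⁻¹) = p (β / 4) (X₄⁻¹ * (G₄⁻¹ * X₁)) := by
        rw [mul_assoc, hpcentral _ h4 X₁ (X₄⁻¹ * G₄⁻¹), mul_assoc]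
      rw [e1]; ring
    simp_rw [e]
    rw [integral_const_mul, hsemi _ _ h4 h4 (X₃ * G₃⁻¹) (G₄⁻¹ * X₁)]
  have step3 : ∀ X₁ X₂ : G,
      (∫ X₃, p (β / 4) (X₁⁻¹ * G₁ * G₂ * X₂) * p (β / 4) (X₂⁻¹ * X₃⁻¹) *
          p (β / 4 + β / 4) (X₃ * G₃⁻¹ * (G₄⁻¹ * X₁)) ∂μ)
      = p (β / 4) (X₁⁻¹ * G₁ * G₂ * X₂) *
          p (β / 4 + β / 4 + β / 4) (G₃⁻¹ * (G₄⁻¹ * X₁) * X₂⁻¹) := by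
    intro X₁ X₂
    have e : ∀ X₃ : G, p (β / 4) (X₁⁻¹ * G₁ * G₂ * X₂) * p (β / 4) (X₂⁻¹ * X₃⁻¹) *
          p (β / 4 + β / 4) (X₃ * G₃⁻¹ * (G₄⁻¹ * X₁))
        = p (β / 4) (X₁⁻¹ * G₁ * G₂ * X₂) *
          (p (β / 4 + β / 4) (G₃⁻¹ * (G₄⁻¹ * X₁) * X₃) * p (β / 4) (X₃⁻¹ * X₂⁻¹)) := by
      intro X₃
      have e1 : p (β / 4 + β / 4) (X₃ * G₃⁻¹ * (G₄⁻¹ * X₁))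
          = p (β / 4 + β / 4) (G₃⁻¹ * (G₄⁻¹ * X₁) * X₃) := by
        rw [mul_assoc, hpcentral _ h2 X₃ (G₃⁻¹ * (G₄⁻¹ * X₁))]
      have e2 : p (β / 4) (X₂⁻¹ * X₃⁻¹) = p (β / 4) (X₃⁻¹ * X₂⁻¹) := hpcentral _ h4 _ _
      rw [e1, e2]; ring
    simp_rw [e]
    rw [integral_const_mul, hsemi _ _ h2 h4 (G₃⁻¹ * (G₄⁻¹ * X₁)) X₂⁻¹]
  have step2 : ∀ X₁ : G,
      (∫ X₂, p (β / 4) (X₁⁻¹ * G₁ * G₂ * X₂) *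
          p (β / 4 + β / 4 + β / 4) (G₃⁻¹ * (G₄⁻¹ * X₁) * X₂⁻¹) ∂μ)
      = p β (G₃⁻¹ * G₄⁻¹ * G₁ * G₂) := by
    intro X₁
    have e : ∀ X₂ : G, p (β / 4) (X₁⁻¹ * G₁ * G₂ * X₂) *
          p (β / 4 + β / 4 + β / 4) (G₃⁻¹ * (G₄⁻¹ * X₁) * X₂⁻¹)
        = p (β / 4) (X₁⁻¹ * G₁ * G₂ * X₂) *
          p (β / 4 + β / 4 + β / 4) (X₂⁻¹ * (G₃⁻¹ * (G₄⁻¹ * X₁))) := by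
      intro X₂
      rw [hpcentral _ h34 (G₃⁻¹ * (G₄⁻¹ * X₁)) X₂⁻¹]
    simp_rw [e]
    rw [hsemi _ _ h4 h34 (X₁⁻¹ * G₁ * G₂) (G₃⁻¹ * (G₄⁻¹ * X₁))]
    have hb : β / 4 + (β / 4 + β / 4 + β / 4) = β := by ring
    rw [hb]
    have e3 : (X₁⁻¹ * G₁ * G₂) * (G₃⁻¹ * (G₄⁻¹ * X₁))
        = X₁⁻¹ * (G₁ * G₂ * G₃⁻¹ * G₄⁻¹ * X₁) := by group
    rw [e3, hpcentral _ hβ X₁⁻¹ _]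
    have e4 : (G₁ * G₂ * G₃⁻¹ * G₄⁻¹ * X₁) * X₁⁻¹ = (G₁ * G₂) * (G₃⁻¹ * G₄⁻¹) := by group
    rw [e4, hpcentral _ hβ (G₁ * G₂) (G₃⁻¹ * G₄⁻¹)]
    have e5 : (G₃⁻¹ * G₄⁻¹) * (G₁ * G₂) = G₃⁻¹ * G₄⁻¹ * G₁ * G₂ := by group
    rw [e5]
  simp_rw [step4, step3, step2]
  simp
end

section
/- Let G be a compact Hausdorff topological group with normalized Haar probability measure μ_H, and let p', p'', p : G → ℝ be continuous central functions satisfying the semigroup conditions. Then for all G₁, G₂, G₃, G₄ ∈ G and all φ₁, φ₂, φ₃, φ₄, φ̄₁, φ̄₂, φ̄₃, φ̄₄ ∈ G, ∫∫∫∫ p'(φ̄₁Y₁Y₄⁻¹G₄⁻¹φ₁) · p'(Y₁⁻¹G₁φ₂φ̄₂Y₂) · p'(Y₄Y₃⁻¹G₃⁻¹φ₄φ̄₄) · p'(Y₂⁻¹G₂φ₃φ̄₃Y₃) dμ_H(Y₁) dμ_H(Y₂) dμ_H(Y₃) dμ_H(Y₄) = p(G₄⁻¹φ₁φ̄₁G₁φ₂φ̄₂G₂φ₃φ̄₃G₃⁻¹φ₄φ̄₄).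 (One-plaquette consistency of the lattice measure in the presence of matter fields attached to the vertices.) -/
open MeasureTheory

/-- **One-plaquette consistency of the lattice measure in the presence of matter fields.**
For a compact Hausdorff topological group `G` with normalized Haar probability measure `μ`,
continuous central functions `p', p'', p : G → ℝ` satisfying the semigroup conditions, edge
variables `G₁, G₂, G₃, G₄` and matter-field group elements `φᵢ` and `ψᵢ` (the latter standing
for `φ̄ᵢ`) at the vertices, the integral over the four interior variables `Y₁, Y₂, Y₃, Y₄` of
the product of the four small-plaquette fermion-string densities reproduces the
large-plaquette density. -/
theorem plaquette_subdivision_consistency_with_matter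
    {G : Type*} [Group G] [TopologicalSpace G] [IsTopologicalGroup G]
    [CompactSpace G] [T2Space G] [MeasurableSpace G] [BorelSpace G]
    (μ : Measure G) [μ.IsHaarMeasure] [IsProbabilityMeasure μ]
    (p' p'' p : G → ℝ)
    (hp'cont : Continuous p') (hp''cont : Continuous p'') (hpcont : Continuous p)
    (hp'central : ∀ x y : G, p' (x * y) = p' (y * x))
    (hp''central : ∀ x y : G, p'' (x * y) = p'' (y * x))
    (hpcentral : ∀ x y : G, p (x * y) = p (y * x))
    (hsemi1 : ∀ g h : G, ∫ x, p' (g * x) * p' (x⁻¹ * h) ∂μ = p'' (g * h))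
    (hsemi2 : ∀ g h : G, ∫ x, p'' (g * x) * p'' (x⁻¹ * h) ∂μ = p (g * h))
    (G₁ G₂ G₃ G₄ φ₁ φ₂ φ₃ φ₄ ψ₁ ψ₂ ψ₃ ψ₄ : G) :
    (∫ Y₁, ∫ Y₂, ∫ Y₃, ∫ Y₄,
        p' (ψ₁ * Y₁ * Y₄⁻¹ * G₄⁻¹ * φ₁) * p' (Y₁⁻¹ * G₁ * φ₂ * ψ₂ * Y₂) *
          p' (Y₄ * Y₃⁻¹ * G₃⁻¹ * φ₄ * ψ₄) * p' (Y₂⁻¹ * G₂ * φ₃ * ψ₃ * Y₃) ∂μ ∂μ ∂μ ∂μ) =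
      p (G₄⁻¹ * φ₁ * ψ₁ * G₁ * φ₂ * ψ₂ * G₂ * φ₃ * ψ₃ * G₃⁻¹ * φ₄ * ψ₄) := by
  -- an auxiliary form of the first semigroup condition
  have step1 : ∀ a b : G, (∫ x, p' (a * x⁻¹) * p' (x * b) ∂μ) = p'' (b * a) := by
    intro a b
    have h : ∀ x : G, p' (a * x⁻¹) * p' (x * b) = p' (b * x) * p' (x⁻¹ * a) := fun x => by
      rw [hp'central a x⁻¹, hp'central x b, mul_comm]
    simp only [h]
    exact hsemi1 b a
  -- Step 1: the innermost integral over `Y₄`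
  have hY4 : ∀ Y₁ Y₂ Y₃ : G,
      (∫ Y₄, p' (ψ₁ * Y₁ * Y₄⁻¹ * G₄⁻¹ * φ₁) * p' (Y₁⁻¹ * G₁ * φ₂ * ψ₂ * Y₂) *
          p' (Y₄ * Y₃⁻¹ * G₃⁻¹ * φ₄ * ψ₄) * p' (Y₂⁻¹ * G₂ * φ₃ * ψ₃ * Y₃) ∂μ) =
        p' (Y₁⁻¹ * G₁ * φ₂ * ψ₂ * Y₂) * p' (Y₂⁻¹ * G₂ * φ₃ * ψ₃ * Y₃) *
          p'' ((Y₃⁻¹ * G₃⁻¹ * φ₄ * ψ₄) * (G₄⁻¹ * φ₁ * (ψ₁ * Y₁))) := by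
    intro Y₁ Y₂ Y₃
    have h : ∀ Y₄ : G,
        p' (ψ₁ * Y₁ * Y₄⁻¹ * G₄⁻¹ * φ₁) * p' (Y₁⁻¹ * G₁ * φ₂ * ψ₂ * Y₂) *
          p' (Y₄ * Y₃⁻¹ * G₃⁻¹ * φ₄ * ψ₄) * p' (Y₂⁻¹ * G₂ * φ₃ * ψ₃ * Y₃) =
        (p' (Y₁⁻¹ * G₁ * φ₂ * ψ₂ * Y₂) * p' (Y₂⁻¹ * G₂ * φ₃ * ψ₃ * Y₃)) *
          (p' ((G₄⁻¹ * φ₁ * (ψ₁ * Y₁)) * Y₄⁻¹) * p' (Y₄ * (Y₃⁻¹ * G₃⁻¹ * φ₄ * ψ₄))) := by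
      intro Y₄
      rw [show ψ₁ * Y₁ * Y₄⁻¹ * G₄⁻¹ * φ₁ = (ψ₁ * Y₁ * Y₄⁻¹) * (G₄⁻¹ * φ₁) by group,
        hp'central (ψ₁ * Y₁ * Y₄⁻¹) (G₄⁻¹ * φ₁),
        show (G₄⁻¹ * φ₁) * (ψ₁ * Y₁ * Y₄⁻¹) = (G₄⁻¹ * φ₁ * (ψ₁ * Y₁)) * Y₄⁻¹ by group,
        show Y₄ * Y₃⁻¹ * G₃⁻¹ * φ₄ * ψ₄ = Y₄ * (Y₃⁻¹ * G₃⁻¹ * φ₄ * ψ₄) by group]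
      ring
    simp only [h]
    rw [integral_const_mul, step1]
  -- Step 2: the integral over `Y₂` (for fixed `Y₁`, `Y₃`)
  have hY2 : ∀ Y₁ Y₃ : G,
      (∫ Y₂, p' (Y₁⁻¹ * G₁ * φ₂ * ψ₂ * Y₂) * p' (Y₂⁻¹ * G₂ * φ₃ * ψ₃ * Y₃) *
          p'' ((Y₃⁻¹ * G₃⁻¹ * φ₄ * ψ₄) * (G₄⁻¹ * φ₁ * (ψ₁ * Y₁))) ∂μ) =
        p'' ((Y₁⁻¹ * G₁ * φ₂ * ψ₂) * (G₂ * φ₃ * ψ₃ * Y₃)) *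
          p'' ((Y₃⁻¹ * G₃⁻¹ * φ₄ * ψ₄) * (G₄⁻¹ * φ₁ * (ψ₁ * Y₁))) := by
    intro Y₁ Y₃
    have h : ∀ Y₂ : G,
        p' (Y₁⁻¹ * G₁ * φ₂ * ψ₂ * Y₂) * p' (Y₂⁻¹ * G₂ * φ₃ * ψ₃ * Y₃) *
          p'' ((Y₃⁻¹ * G₃⁻¹ * φ₄ * ψ₄) * (G₄⁻¹ * φ₁ * (ψ₁ * Y₁))) =
        p'' ((Y₃⁻¹ * G₃⁻¹ * φ₄ * ψ₄) * (G₄⁻¹ * φ₁ * (ψ₁ * Y₁))) *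
          (p' ((Y₁⁻¹ * G₁ * φ₂ * ψ₂) * Y₂) * p' (Y₂⁻¹ * (G₂ * φ₃ * ψ₃ * Y₃))) := by
      intro Y₂
      rw [show Y₂⁻¹ * G₂ * φ₃ * ψ₃ * Y₃ = Y₂⁻¹ * (G₂ * φ₃ * ψ₃ * Y₃) by group,
        show Y₁⁻¹ * G₁ * φ₂ * ψ₂ * Y₂ = (Y₁⁻¹ * G₁ * φ₂ * ψ₂) * Y₂ by group]
      ring
    simp only [h]
    rw [integral_const_mul, hsemi1, mul_comm]
  -- Step 3: the integral over `Y₃` (for fixed `Y₁`)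
  have hY3 : ∀ Y₁ : G,
      (∫ Y₃, p'' ((Y₁⁻¹ * G₁ * φ₂ * ψ₂) * (G₂ * φ₃ * ψ₃ * Y₃)) *
          p'' ((Y₃⁻¹ * G₃⁻¹ * φ₄ * ψ₄) * (G₄⁻¹ * φ₁ * (ψ₁ * Y₁))) ∂μ) =
        p (G₄⁻¹ * φ₁ * ψ₁ * G₁ * φ₂ * ψ₂ * G₂ * φ₃ * ψ₃ * G₃⁻¹ * φ₄ * ψ₄) := by
    intro Y₁
    have h : ∀ Y₃ : G,
        p'' ((Y₁⁻¹ * G₁ * φ₂ * ψ₂) * (G₂ * φ₃ * ψ₃ * Y₃)) *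
          p'' ((Y₃⁻¹ * G₃⁻¹ * φ₄ * ψ₄) * (G₄⁻¹ * φ₁ * (ψ₁ * Y₁))) =
        p'' ((Y₁⁻¹ * G₁ * φ₂ * ψ₂ * G₂ * φ₃ * ψ₃) * Y₃) *
          p'' (Y₃⁻¹ * (G₃⁻¹ * φ₄ * ψ₄ * G₄⁻¹ * φ₁ * ψ₁ * Y₁)) := by
      intro Y₃
      rw [show (Y₁⁻¹ * G₁ * φ₂ * ψ₂) * (G₂ * φ₃ * ψ₃ * Y₃) =
            (Y₁⁻¹ * G₁ * φ₂ * ψ₂ * G₂ * φ₃ * ψ₃) * Y₃ by group,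
        show (Y₃⁻¹ * G₃⁻¹ * φ₄ * ψ₄) * (G₄⁻¹ * φ₁ * (ψ₁ * Y₁)) =
            Y₃⁻¹ * (G₃⁻¹ * φ₄ * ψ₄ * G₄⁻¹ * φ₁ * ψ₁ * Y₁) by group]
    simp only [h]
    rw [hsemi2]
    rw [show (Y₁⁻¹ * G₁ * φ₂ * ψ₂ * G₂ * φ₃ * ψ₃) * (G₃⁻¹ * φ₄ * ψ₄ * G₄⁻¹ * φ₁ * ψ₁ * Y₁) =
          Y₁⁻¹ * (G₁ * φ₂ * ψ₂ * G₂ * φ₃ * ψ₃ * G₃⁻¹ * φ₄ * ψ₄ * G₄⁻¹ * φ₁ * ψ₁ * Y₁) by group,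
      hpcentral,
      show (G₁ * φ₂ * ψ₂ * G₂ * φ₃ * ψ₃ * G₃⁻¹ * φ₄ * ψ₄ * G₄⁻¹ * φ₁ * ψ₁ * Y₁) * Y₁⁻¹ =
          (G₁ * φ₂ * ψ₂ * G₂ * φ₃ * ψ₃ * G₃⁻¹ * φ₄ * ψ₄) * (G₄⁻¹ * φ₁ * ψ₁) by group,
      hpcentral,
      show (G₄⁻¹ * φ₁ * ψ₁) * (G₁ * φ₂ * ψ₂ * G₂ * φ₃ * ψ₃ * G₃⁻¹ * φ₄ * ψ₄) =
          G₄⁻¹ * φ₁ * ψ₁ * G₁ * φ₂ * ψ₂ * G₂ * φ₃ * ψ₃ * G₃⁻¹ * φ₄ * ψ₄ by group]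
  -- Put everything together, using Fubini once to swap the `Y₂` and `Y₃` integrals.
  have hfub : ∀ Y₁ : G,
      (∫ Y₂, ∫ Y₃, p' (Y₁⁻¹ * G₁ * φ₂ * ψ₂ * Y₂) * p' (Y₂⁻¹ * G₂ * φ₃ * ψ₃ * Y₃) *
          p'' ((Y₃⁻¹ * G₃⁻¹ * φ₄ * ψ₄) * (G₄⁻¹ * φ₁ * (ψ₁ * Y₁))) ∂μ ∂μ) =
      ∫ Y₃, ∫ Y₂, p' (Y₁⁻¹ * G₁ * φ₂ * ψ₂ * Y₂) * p' (Y₂⁻¹ * G₂ * φ₃ * ψ₃ * Y₃) *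
          p'' ((Y₃⁻¹ * G₃⁻¹ * φ₄ * ψ₄) * (G₄⁻¹ * φ₁ * (ψ₁ * Y₁))) ∂μ ∂μ := by
    intro Y₁
    apply integral_integral_swap_of_hasCompactSupport
    · show Continuous fun z : G × G => _
      apply Continuous.mul
      · apply Continuous.mul
        · exact hp'cont.comp (by fun_prop)
        · exact hp'cont.comp (by fun_prop)
      · exact hp''cont.comp (by fun_prop)
    · exact HasCompactSupport.of_compactSpace _
  calc (∫ Y₁, ∫ Y₂, ∫ Y₃, ∫ Y₄,
        p' (ψ₁ * Y₁ * Y₄⁻¹ * G₄⁻¹ * φ₁) * p' (Y₁⁻¹ * G₁ * φ₂ * ψ₂ * Y₂) *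
          p' (Y₄ * Y₃⁻¹ * G₃⁻¹ * φ₄ * ψ₄) * p' (Y₂⁻¹ * G₂ * φ₃ * ψ₃ * Y₃) ∂μ ∂μ ∂μ ∂μ)
      = ∫ Y₁, ∫ Y₂, ∫ Y₃, p' (Y₁⁻¹ * G₁ * φ₂ * ψ₂ * Y₂) * p' (Y₂⁻¹ * G₂ * φ₃ * ψ₃ * Y₃) *
          p'' ((Y₃⁻¹ * G₃⁻¹ * φ₄ * ψ₄) * (G₄⁻¹ * φ₁ * (ψ₁ * Y₁))) ∂μ ∂μ ∂μ := by
        simp only [hY4]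
    _ = ∫ Y₁, ∫ Y₃, ∫ Y₂, p' (Y₁⁻¹ * G₁ * φ₂ * ψ₂ * Y₂) * p' (Y₂⁻¹ * G₂ * φ₃ * ψ₃ * Y₃) *
          p'' ((Y₃⁻¹ * G₃⁻¹ * φ₄ * ψ₄) * (G₄⁻¹ * φ₁ * (ψ₁ * Y₁))) ∂μ ∂μ ∂μ := by
        exact integral_congr_ae (Filter.Eventually.of_forall fun Y₁ => hfub Y₁)
    _ = ∫ Y₁, ∫ Y₃, p'' ((Y₁⁻¹ * G₁ * φ₂ * ψ₂) * (G₂ * φ₃ * ψ₃ * Y₃)) *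
          p'' ((Y₃⁻¹ * G₃⁻¹ * φ₄ * ψ₄) * (G₄⁻¹ * φ₁ * (ψ₁ * Y₁))) ∂μ ∂μ := by
        simp only [hY2]
    _ = ∫ Y₁, p (G₄⁻¹ * φ₁ * ψ₁ * G₁ * φ₂ * ψ₂ * G₂ * φ₃ * ψ₃ * G₃⁻¹ * φ₄ * ψ₄) ∂μ := by
        simp only [hY3]
    _ = p (G₄⁻¹ * φ₁ * ψ₁ * G₁ * φ₂ * ψ₂ * G₂ * φ₃ * ψ₃ * G₃⁻¹ * φ₄ * ψ₄) := by
        simp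
end

section
/- Let (gᵢ)_{i∈ι} be a family of elements of SU(3), the group of 3×3 complex special unitary matrices. Then the centralizer {h ∈ SU(3) : h gᵢ = gᵢ h for all i} equals the center of SU(3) (the scalar matrices ωI with ω³ = 1) if and only if the family has no common eigenvector, i.e. there is no nonzero v ∈ ℂ³ such that for every i there exists λᵢ ∈ ℂ with gᵢ v = λᵢ v. (A lattice gauge configuration lies in the generic stratum exactly when its link variables have no common eigenspace.) -/
open Matrix Complex Module

namespace SU3Aux

lemma smul_vecMulVec (a : ℂ) (v w : Fin 3 → ℂ) :
    vecMulVec (a • v) w = a • vecMulVec v w := by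
  ext i j; simp [vecMulVec_apply, mul_assoc]

lemma vecMulVec_smul (a : ℂ) (v w : Fin 3 → ℂ) :
    vecMulVec v (a • w) = a • vecMulVec v w := by
  ext i j; simp [vecMulVec_apply]; ring

lemma mul_vecMulVec (g : Matrix (Fin 3) (Fin 3) ℂ) (v w : Fin 3 → ℂ) :
    g * vecMulVec v w = vecMulVec (g *ᵥ v) w := by
  ext i j
  simp [Matrix.mul_apply, vecMulVec_apply, mulVec, dotProduct, Finset.sum_mul, mul_assoc]

lemma vecMulVec_mul (g : Matrix (Fin 3) (Fin 3) ℂ) (v w : Fin 3 → ℂ) :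
    vecMulVec v w * g = vecMulVec v (w ᵥ* g) := by
  ext i j
  simp [Matrix.mul_apply, vecMulVec_apply, vecMul, dotProduct, Finset.mul_sum, mul_assoc]

lemma vecMulVec_mulVec (v w x : Fin 3 → ℂ) :
    vecMulVec v w *ᵥ x = (w ⬝ᵥ x) • v := by
  ext i
  simp [vecMulVec_apply, mulVec, dotProduct, Finset.mul_sum]
  rw [Finset.sum_mul]
  exact Finset.sum_congr rfl fun k _ => by ring

lemma vecMulVec_mul_self (v : Fin 3 → ℂ) :
    vecMulVec v (star v) * vecMulVec v (star v) = (star v ⬝ᵥ v) • vecMulVec v (star v) := by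
  rw [vecMulVec_mul]
  ext i j
  simp [vecMulVec_apply, vecMul, dotProduct, Finset.sum_mul, Finset.mul_sum]
  exact Finset.sum_congr rfl fun k _ => by ring

lemma star_vecMulVec (v : Fin 3 → ℂ) :
    star (vecMulVec v (star v)) = vecMulVec v (star v) := by
  ext i j
  simp [vecMulVec_apply, Matrix.star_apply]
  ring

lemma combo_mul (x y x' y' c : ℂ) (M : Matrix (Fin 3) (Fin 3) ℂ) (hMM : M * M = c • M) :
    (x • 1 + y • M) * (x' • (1 : Matrix (Fin 3) (Fin 3) ℂ) + y' • M) =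
      (x * x') • 1 + (x * y' + y * x' + y * y' * c) • M := by
  simp only [Matrix.add_mul, Matrix.mul_add, smul_mul_assoc, mul_smul_comm,
    Matrix.one_mul, Matrix.mul_one, hMM]
  module

lemma center_mem (ω : ℂ) (hω : ω ^ 3 = 1) :
    ω • (1 : Matrix (Fin 3) (Fin 3) ℂ) ∈ Matrix.specialUnitaryGroup (Fin 3) ℂ := by
  have hn : Complex.normSq ω = 1 := by
    have h3 : (Complex.normSq ω) ^ 3 = 1 := by
      rw [← map_pow, hω]; simp
    have h0 : 0 ≤ Complex.normSq ω := Complex.normSq_nonneg ω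
    nlinarith [sq_nonneg (Complex.normSq ω - 1), sq_nonneg (Complex.normSq ω + 1)]
  have hωs : ω * star ω = 1 := by
    rw [Complex.star_def, Complex.mul_conj, hn]; norm_num
  rw [Matrix.mem_specialUnitaryGroup_iff]
  constructor
  · rw [Matrix.mem_unitaryGroup_iff]
    rw [star_smul, star_one, smul_mul_smul_comm, one_mul, hωs, one_smul]
  · rw [Matrix.det_smul, Matrix.det_one, mul_one, Fintype.card_fin, hω]

lemma construction {ι : Type*} (g : ι → Matrix (Fin 3) (Fin 3) ℂ)
    (hg : ∀ i, g i ∈ Matrix.specialUnitaryGroup (Fin 3) ℂ)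
    (v : Fin 3 → ℂ) (hv0 : v ≠ 0)
    (hlam : ∀ i, ∃ lam : ℂ, (g i) *ᵥ v = lam • v) :
    ∃ h : Matrix (Fin 3) (Fin 3) ℂ,
      (h ∈ Matrix.specialUnitaryGroup (Fin 3) ℂ ∧ ∀ i, h * g i = g i * h) ∧
      ¬ ∃ ω : ℂ, ω ^ 3 = 1 ∧ h = ω • (1 : Matrix (Fin 3) (Fin 3) ℂ) := by
  set c : ℂ := star v ⬝ᵥ v with hcdef
  have hcsum : c = ((∑ i, Complex.normSq (v i) : ℝ) : ℂ) := by
    rw [hcdef]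
    simp only [dotProduct, Pi.star_apply]
    push_cast
    exact Finset.sum_congr rfl fun k _ => by
      rw [Complex.star_def, mul_comm, Complex.mul_conj]
  have hc0 : c ≠ 0 := by
    intro h0
    rw [hcsum] at h0
    norm_cast at h0
    have hz := (Finset.sum_eq_zero_iff_of_nonneg
      (fun i _ => Complex.normSq_nonneg (v i))).mp h0
    exact hv0 (funext fun i => Complex.normSq_eq_zero.mp (hz i (Finset.mem_univ i)))
  have hcstar : star c = c := by
    simp only [hcdef, dotProduct, star_sum, star_mul', star_star, Pi.star_apply]
    exact Finset.sum_congr rfl fun k _ => by ring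
  set M : Matrix (Fin 3) (Fin 3) ℂ := vecMulVec v (star v) with hMdef
  have hMM : M * M = c • M := vecMulVec_mul_self v
  have hMstar : star M = M := star_vecMulVec v
  -- commutation facts
  have hMg : ∀ i, ∃ lam : ℂ, g i * M = lam • M ∧ M * g i = lam • M := by
    intro i
    obtain ⟨lam, hl⟩ := hlam i
    have hgu : star (g i) * g i = 1 := (Matrix.mem_unitaryGroup_iff'.mp (hg i).1)
    refine ⟨lam, ?_, ?_⟩
    · rw [hMdef, mul_vecMulVec, hl, smul_vecMulVec]
    · -- need star v ᵥ* g i = lam • star v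
      have hback : lam • (star (g i) *ᵥ v) = v := by
        have : star (g i) *ᵥ (g i *ᵥ v) = v := by
          rw [Matrix.mulVec_mulVec, hgu, Matrix.one_mulVec]
        rwa [hl, Matrix.mulVec_smul] at this
      have hnorm : star lam * lam = 1 := by
        have hdot : star (g i *ᵥ v) ⬝ᵥ (g i *ᵥ v) = c := by
          rw [Matrix.star_mulVec, ← Matrix.dotProduct_mulVec, Matrix.mulVec_mulVec,
            ← Matrix.star_eq_conjTranspose, hgu, Matrix.one_mulVec]
        rw [hl] at hdot
        have expand : star (lam • v) ⬝ᵥ (lam • v) = star lam * lam * (star v ⬝ᵥ v) := by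
          rw [star_smul, smul_dotProduct, dotProduct_smul, smul_eq_mul,
            smul_eq_mul]
          ring
        have key : star lam * lam * c = c := by rw [hcdef, ← expand, hdot]
        exact mul_right_cancel₀ hc0 (by rw [key, one_mul])
      have hstarv : star (g i) *ᵥ v = star lam • v := by
        calc star (g i) *ᵥ v = (star lam * lam) • (star (g i) *ᵥ v) := by
              rw [hnorm, one_smul]
          _ = star lam • (lam • (star (g i) *ᵥ v)) := by rw [smul_smul]
          _ = star lam • v := by rw [hback]
      have hvmg : star v ᵥ* g i = lam • star v := by
        have h1 : star (star (g i) *ᵥ v) = star v ᵥ* g i := by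
          rw [Matrix.star_mulVec, ← Matrix.star_eq_conjTranspose, star_star]
        rw [← h1, hstarv, star_smul, star_star]
      rw [hMdef, vecMulVec_mul, hvmg, vecMulVec_smul]
  -- the matrix h
  set b : ℂ := (-1 - Complex.I) * c⁻¹ with hbdef
  set h : Matrix (Fin 3) (Fin 3) ℂ := Complex.I • 1 + b • M with hhdef
  have hstarh : star h = (-Complex.I) • 1 + ((-1 + Complex.I) * c⁻¹) • M := by
    rw [hhdef, star_add, star_smul, star_smul, star_one, hMstar]
    congr 1
    · congr 1
      simp [Complex.star_def, Complex.ext_iff]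
    · congr 1
      rw [hbdef, star_mul', star_inv₀, hcstar]
      simp [Complex.star_def, Complex.ext_iff]
  have hcc : c⁻¹ * c = 1 := inv_mul_cancel₀ hc0
  -- unitarity
  have hunit : h * star h = 1 := by
    rw [hstarh, hhdef, combo_mul _ _ _ _ _ M hMM]
    have e1 : Complex.I * -Complex.I = 1 := by
      simp [Complex.ext_iff]
    have e2 : Complex.I * ((-1 + Complex.I) * c⁻¹) + b * -Complex.I +
        b * ((-1 + Complex.I) * c⁻¹) * c = 0 := by
      rw [hbdef]
      field_simp
      linear_combination Complex.I_sq
    rw [e1, e2, one_smul, zero_smul, add_zero]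
  -- determinant
  have hdet : h.det = 1 := by
    have hform : h = Complex.I •
        (1 + Matrix.replicateCol Unit (((Complex.I - 1) * c⁻¹) • v) * Matrix.replicateRow Unit (star v)) := by
      rw [← Matrix.vecMulVec_eq, smul_vecMulVec, smul_add, smul_smul, hhdef, ← hMdef]
      congr 2
      rw [hbdef]
      linear_combination (-c⁻¹) * Complex.I_sq
    rw [hform, Matrix.det_smul, Matrix.det_one_add_replicateCol_mul_replicateRow, Fintype.card_fin]
    have : star v ⬝ᵥ ((Complex.I - 1) * c⁻¹) • v = Complex.I - 1 := by
      rw [dotProduct_smul, smul_eq_mul, ← hcdef, mul_assoc, hcc, mul_one]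
    rw [this]
    linear_combination (Complex.I ^ 2 - 1) * Complex.I_sq
  refine ⟨h, ⟨?_, ?_⟩, ?_⟩
  · rw [Matrix.mem_specialUnitaryGroup_iff]
    exact ⟨Matrix.mem_unitaryGroup_iff.mpr hunit, hdet⟩
  · intro i
    obtain ⟨lam, hgM, hMgi⟩ := hMg i
    rw [hhdef, Matrix.add_mul, Matrix.mul_add, smul_mul_assoc, mul_smul_comm, one_mul, mul_one,
      smul_mul_assoc, mul_smul_comm, hgM, hMgi]
  · rintro ⟨ω, hω, hωh⟩
    -- evaluate at v
    have hv : h *ᵥ v = (-1 : ℂ) • v := by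
      rw [hhdef, Matrix.add_mulVec, Matrix.smul_mulVec, Matrix.smul_mulVec,
        Matrix.one_mulVec, hMdef, vecMulVec_mulVec, ← hcdef]
      rw [smul_smul, hbdef, mul_assoc, hcc, mul_one]
      rw [← add_smul]
      congr 1
      ring
    rw [hωh] at hv
    rw [Matrix.smul_mulVec, Matrix.one_mulVec] at hv
    obtain ⟨j, hj⟩ := Function.ne_iff.mp hv0
    have : ω = -1 := by
      have := congrFun hv j
      simp only [Pi.smul_apply, smul_eq_mul] at this
      exact mul_right_cancel₀ hj this
    rw [this] at hω
    norm_num at hω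


lemma common_eigenvector_of_dim_one {ι : Type*} (g : ι → Matrix (Fin 3) (Fin 3) ℂ)
    (W : Submodule ℂ (Fin 3 → ℂ)) (hW : finrank ℂ W = 1)
    (hinv : ∀ i, ∀ x ∈ W, g i *ᵥ x ∈ W) :
    ∃ v : Fin 3 → ℂ, v ≠ 0 ∧ ∀ i, ∃ lam : ℂ, g i *ᵥ v = lam • v := by
  have hWb : W ≠ ⊥ := by
    intro hb; rw [hb] at hW; simp [finrank_bot] at hW
  obtain ⟨v, hvW, hv0⟩ := Submodule.exists_mem_ne_zero_of_ne_bot hWb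
  have hspan : Submodule.span ℂ {v} = W := by
    apply Submodule.eq_of_le_of_finrank_le (Submodule.span_le.mpr (by simp [hvW]))
    rw [hW, finrank_span_singleton hv0]
  refine ⟨v, hv0, fun i => ?_⟩
  have hm := hinv i v hvW
  rw [← hspan, Submodule.mem_span_singleton] at hm
  obtain ⟨c, hc⟩ := hm
  exact ⟨c, hc.symm⟩

lemma scalar_of_no_common_eigenvector
    {ι : Type*} {g : ι → Matrix (Fin 3) (Fin 3) ℂ}
    {h : Matrix (Fin 3) (Fin 3) ℂ}
    (hcomm : ∀ i, h * g i = g i * h)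
    (hno : ¬ ∃ v : Fin 3 → ℂ, v ≠ 0 ∧ ∀ i, ∃ lam : ℂ, (g i) *ᵥ v = lam • v) :
    ∃ μ : ℂ, h = μ • 1 := by
  obtain ⟨μ, hμ⟩ := Module.End.exists_eigenvalue (Matrix.toLin' h)
  refine ⟨μ, ?_⟩
  by_contra hne
  apply hno
  set A : Matrix (Fin 3) (Fin 3) ℂ := h - μ • 1 with hAdef
  have hA0 : A ≠ 0 := fun h0 => hne (by rwa [sub_eq_zero] at h0)
  have hAg : ∀ i, A * g i = g i * A := by
    intro i
    simp only [hAdef, Matrix.sub_mul, Matrix.mul_sub, hcomm i, smul_mul_assoc, mul_smul_comm,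
      one_mul, mul_one]
  set f := Matrix.toLin' A with hfdef
  have hker : ∀ i, ∀ x ∈ LinearMap.ker f, g i *ᵥ x ∈ LinearMap.ker f := by
    intro i x hx
    simp only [LinearMap.mem_ker, hfdef, Matrix.toLin'_apply] at hx ⊢
    rw [Matrix.mulVec_mulVec, hAg i, ← Matrix.mulVec_mulVec, hx, Matrix.mulVec_zero]
  have hrange : ∀ i, ∀ x ∈ LinearMap.range f, g i *ᵥ x ∈ LinearMap.range f := by
    rintro i x ⟨y, rfl⟩
    exact ⟨g i *ᵥ y, by simp only [hfdef, Matrix.toLin'_apply, Matrix.mulVec_mulVec, hAg i]⟩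
  obtain ⟨v₀, hv₀⟩ := hμ.exists_hasEigenvector
  have happ : h *ᵥ v₀ = μ • v₀ := by
    have := hv₀.apply_eq_smul
    rwa [Matrix.toLin'_apply] at this
  have hv₀ker : v₀ ∈ LinearMap.ker f := by
    simp only [LinearMap.mem_ker, hfdef, Matrix.toLin'_apply, hAdef, Matrix.sub_mulVec,
      Matrix.smul_mulVec, Matrix.one_mulVec, happ, sub_self]
  have hker_ne : 0 < finrank ℂ (LinearMap.ker f) :=
    Module.finrank_pos_iff_exists_ne_zero.mpr ⟨⟨v₀, hv₀ker⟩, by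
      intro hz; exact hv₀.2 (by simpa using congrArg Subtype.val hz)⟩
  have hrange_ne : 0 < finrank ℂ (LinearMap.range f) := by
    rw [Module.finrank_pos_iff_exists_ne_zero]
    have hf0 : f ≠ 0 := by
      intro hf0
      exact hA0 ((LinearEquiv.map_eq_zero_iff Matrix.toLin').mp hf0)
    obtain ⟨x, hx⟩ : ∃ x, f x ≠ 0 := by
      by_contra hall
      push_neg at hall
      exact hf0 (LinearMap.ext fun x => hall x)
    exact ⟨⟨f x, ⟨x, rfl⟩⟩, by
      intro hz; exact hx (by simpa using congrArg Subtype.val hz)⟩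
  have hdim : finrank ℂ (LinearMap.range f) + finrank ℂ (LinearMap.ker f) = 3 := by
    rw [LinearMap.finrank_range_add_finrank_ker f]
    simp [Module.finrank_fin_fun]
  have hcase : finrank ℂ (LinearMap.ker f) = 1 ∨ finrank ℂ (LinearMap.range f) = 1 := by omega
  rcases hcase with hc | hc
  · exact common_eigenvector_of_dim_one g _ hc hker
  · exact common_eigenvector_of_dim_one g _ hc hrange


end SU3Aux

/-- **A lattice gauge configuration lies in the generic stratum exactly when its link
variables have no common eigenvector.**  For a family `(gᵢ)` of elements of `SU(3)`, the
centralizer `{h ∈ SU(3) : h gᵢ = gᵢ h for all i}` equals the center of `SU(3)` (the scalar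
matrices `ω I` with `ω³ = 1`) if and only if the family has no common eigenvector. -/
theorem su3_centralizer_eq_center_iff_no_common_eigenvector
    {ι : Type*} (g : ι → Matrix (Fin 3) (Fin 3) ℂ)
    (hg : ∀ i, g i ∈ Matrix.specialUnitaryGroup (Fin 3) ℂ) :
    ({h : Matrix (Fin 3) (Fin 3) ℂ |
        h ∈ Matrix.specialUnitaryGroup (Fin 3) ℂ ∧ ∀ i, h * g i = g i * h} =
      {h : Matrix (Fin 3) (Fin 3) ℂ |
        ∃ ω : ℂ, ω ^ 3 = 1 ∧ h = ω • (1 : Matrix (Fin 3) (Fin 3) ℂ)}) ↔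
    ¬ ∃ v : Fin 3 → ℂ, v ≠ 0 ∧ ∀ i, ∃ lam : ℂ, (g i).mulVec v = lam • v := by
  constructor
  · rintro hEq ⟨v, hv0, hlam⟩
    obtain ⟨h, hmem, hnc⟩ := SU3Aux.construction g hg v hv0 hlam
    apply hnc
    have : h ∈ {h : Matrix (Fin 3) (Fin 3) ℂ |
        h ∈ Matrix.specialUnitaryGroup (Fin 3) ℂ ∧ ∀ i, h * g i = g i * h} := hmem
    rw [hEq] at this
    exact this
  · intro hno
    ext h
    simp only [Set.mem_setOf_eq]
    constructor
    · rintro ⟨hmem, hcomm⟩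
      obtain ⟨μ, rfl⟩ := SU3Aux.scalar_of_no_common_eigenvector hcomm hno
      refine ⟨μ, ?_, rfl⟩
      have hdet := (Matrix.mem_specialUnitaryGroup_iff.mp hmem).2
      rwa [Matrix.det_smul, Matrix.det_one, mul_one, Fintype.card_fin] at hdet
    · rintro ⟨ω, hω, rfl⟩
      exact ⟨SU3Aux.center_mem ω hω,
        fun i => by rw [smul_mul_assoc, mul_smul_comm, one_mul, mul_one]⟩
end
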